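/- Let α ∈ (0,1), H ≥ 0, and set h(x) = (√(1−α)/√(H²+1)) tanh x. Then the function f(x) = (1/(2(H²+1))) [1 − h(x)·arctanh(h(x))] satisfies the ODE f''(x) + (2/cosh²x) f(x) = (H²+α) cosh²x / ((H²+α)cosh²x + 1−α)² for all x ∈ ℝ. -/

import Mathlib

/-- The inverse hyperbolic tangent. -/
noncomputable def artanh (x : ℝ) : ℝ := Real.log ((1 + x) / (1 - x)) / 2

noncomputable def Afun (k : ℝ) : ℝ → ℝ := fun y =>
  (Real.log (Real.cosh y + k * Real.sinh y) - Real.log (Real.cosh y - k * Real.sinh y)) / 2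

lemma shb (x : ℝ) : -Real.cosh x < Real.sinh x := by
  nlinarith [Real.cosh_add_sinh x, Real.exp_pos x]

lemma ppos (k x : ℝ) (hk0 : 0 ≤ k) (hk1 : k < 1) : 0 < Real.cosh x + k * Real.sinh x := by
  nlinarith [Real.cosh_pos x, Real.sinh_lt_cosh x, shb x,
    mul_pos (sub_pos.2 hk1) (Real.cosh_pos x)]

lemma qpos (k x : ℝ) (hk0 : 0 ≤ k) (hk1 : k < 1) : 0 < Real.cosh x - k * Real.sinh x := by
  nlinarith [Real.cosh_pos x, Real.sinh_lt_cosh x, shb x,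
    mul_pos (sub_pos.2 hk1) (Real.cosh_pos x)]

lemma dpos (k x : ℝ) (hk0 : 0 ≤ k) (hk1 : k < 1) :
    0 < Real.cosh x ^ 2 - k ^ 2 * Real.sinh x ^ 2 := by
  nlinarith [mul_pos (ppos k x hk0 hk1) (qpos k x hk0 hk1)]

lemma hasDerivAt_Afun (k : ℝ) (hk0 : 0 ≤ k) (hk1 : k < 1) (x : ℝ) :
    HasDerivAt (Afun k) (k / (Real.cosh x ^ 2 - k ^ 2 * Real.sinh x ^ 2)) x := by
  have hp : HasDerivAt (fun y => Real.cosh y + k * Real.sinh y)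
      (Real.sinh x + k * Real.cosh x) x :=
    (Real.hasDerivAt_cosh x).add ((Real.hasDerivAt_sinh x).const_mul k)
  have hq : HasDerivAt (fun y => Real.cosh y - k * Real.sinh y)
      (Real.sinh x - k * Real.cosh x) x :=
    (Real.hasDerivAt_cosh x).sub ((Real.hasDerivAt_sinh x).const_mul k)
  have h2 := ((hp.log (ppos k x hk0 hk1).ne').sub (hq.log (qpos k x hk0 hk1).ne')).div_const 2
  refine h2.congr_deriv (Eq.symm ?_)
  have e1 := Real.cosh_sq_sub_sinh_sq x
  have hpne := (ppos k x hk0 hk1).ne'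
  have hqne := (qpos k x hk0 hk1).ne'
  have hdne := (dpos k x hk0 hk1).ne'
  field_simp
  linear_combination (-2 * k * (Real.cosh x ^ 2 - k ^ 2 * Real.sinh x ^ 2)) * e1

set_option maxHeartbeats 2000000 in
theorem stmt8 (α H : ℝ) (hα0 : 0 < α) (hα1 : α < 1) (hH : 0 ≤ H)
    (h f : ℝ → ℝ)
    (hh : ∀ x, h x = Real.sqrt (1 - α) / Real.sqrt (H ^ 2 + 1) * Real.tanh x)
    (hf : ∀ x, f x = 1 / (2 * (H ^ 2 + 1)) * (1 - h x * artanh (h x)))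
    (x : ℝ) :
    deriv (deriv f) x + 2 / Real.cosh x ^ 2 * f x
      = (H ^ 2 + α) * Real.cosh x ^ 2
        / ((H ^ 2 + α) * Real.cosh x ^ 2 + 1 - α) ^ 2 := by
  have hH1 : (0:ℝ) < H ^ 2 + 1 := by positivity
  set k : ℝ := Real.sqrt (1 - α) / Real.sqrt (H ^ 2 + 1) with hkdef
  have hk0 : 0 ≤ k := by positivity
  have hksq : k ^ 2 = (1 - α) / (H ^ 2 + 1) := by
    rw [hkdef, div_pow, Real.sq_sqrt (by linarith : (0:ℝ) ≤ 1 - α),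
      Real.sq_sqrt hH1.le]
  have hks1 : k ^ 2 < 1 := by
    rw [hksq, div_lt_one hH1]; nlinarith [sq_nonneg H]
  have hk1 : k < 1 := by nlinarith [hks1, hk0]
  -- rewrite f in explicit form
  have hfeq : f = fun y => 1 / (2 * (H ^ 2 + 1)) *
      (1 - k * Real.sinh y / Real.cosh y * Afun k y) := by
    funext y
    have hcy := (Real.cosh_pos y).ne'
    have hA : artanh (k * Real.tanh y) = Afun k y := by
      have h1 : 1 + k * Real.tanh y
          = (Real.cosh y + k * Real.sinh y) / Real.cosh y := by
        rw [Real.tanh_eq_sinh_div_cosh]; field_simp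
      have h2 : 1 - k * Real.tanh y
          = (Real.cosh y - k * Real.sinh y) / Real.cosh y := by
        rw [Real.tanh_eq_sinh_div_cosh]; field_simp
      rw [artanh, h1, h2, div_div_div_comm, div_self hcy, div_one,
        Real.log_div (ppos k y hk0 hk1).ne' (qpos k y hk0 hk1).ne']
      rfl
    rw [hf, hh, hA, Real.tanh_eq_sinh_div_cosh]
    ring
  rw [hfeq]
  -- first derivative
  have hd1 : ∀ y : ℝ, HasDerivAt (fun y => 1 / (2 * (H ^ 2 + 1)) *
      (1 - k * Real.sinh y / Real.cosh y * Afun k y))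
      (-(1 / (2 * (H ^ 2 + 1)) * (k / Real.cosh y ^ 2 * Afun k y
        + k ^ 2 * Real.sinh y
          / (Real.cosh y ^ 3 - k ^ 2 * Real.sinh y ^ 2 * Real.cosh y)))) y := by
    intro y
    have hcy := Real.cosh_pos y
    have ht : HasDerivAt (fun z => k * Real.sinh z / Real.cosh z)
        ((k * Real.cosh y * Real.cosh y - k * Real.sinh y * Real.sinh y)
          / Real.cosh y ^ 2) y :=
      ((Real.hasDerivAt_sinh y).const_mul k).div (Real.hasDerivAt_cosh y) hcy.ne'
    have hmul := ht.mul (hasDerivAt_Afun k hk0 hk1 y)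
    have hc := (hmul.const_sub 1).const_mul (1 / (2 * (H ^ 2 + 1)))
    refine hc.congr_deriv (Eq.symm ?_)
    have e1 := Real.cosh_sq_sub_sinh_sq y
    have hdne := (dpos k y hk0 hk1).ne'
    have h3pos : 0 < Real.cosh y ^ 3 - k ^ 2 * Real.sinh y ^ 2 * Real.cosh y := by
      nlinarith [mul_pos hcy (dpos k y hk0 hk1)]
    have h3 := h3pos.ne'
    clear_value k
    field_simp
    linear_combination (k * Afun k y *
      (Real.cosh y ^ 2 - k ^ 2 * Real.sinh y ^ 2)) * e1
  have hderivf : deriv (fun y => 1 / (2 * (H ^ 2 + 1)) *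
      (1 - k * Real.sinh y / Real.cosh y * Afun k y))
      = fun y => -(1 / (2 * (H ^ 2 + 1)) * (k / Real.cosh y ^ 2 * Afun k y
        + k ^ 2 * Real.sinh y
          / (Real.cosh y ^ 3 - k ^ 2 * Real.sinh y ^ 2 * Real.cosh y))) :=
    funext fun y => (hd1 y).deriv
  rw [hderivf]
  have hcx := Real.cosh_pos x
  have hdx := dpos k x hk0 hk1
  have h3px : 0 < Real.cosh x ^ 3 - k ^ 2 * Real.sinh x ^ 2 * Real.cosh x := by
    nlinarith [mul_pos hcx hdx]
  have hd2 : HasDerivAt (fun y => -(1 / (2 * (H ^ 2 + 1)) * (k / Real.cosh y ^ 2 * Afun k y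
        + k ^ 2 * Real.sinh y
          / (Real.cosh y ^ 3 - k ^ 2 * Real.sinh y ^ 2 * Real.cosh y))))
      (-(1 / (2 * (H ^ 2 + 1)) * (-(2 * k * Real.sinh x / Real.cosh x ^ 3) * Afun k x
        + k ^ 2 / (Real.cosh x ^ 2 * (Real.cosh x ^ 2 - k ^ 2 * Real.sinh x ^ 2))
        + (k ^ 2 * Real.cosh x ^ 2 * (Real.cosh x ^ 2 - k ^ 2 * Real.sinh x ^ 2)
            - 3 * k ^ 2 * Real.cosh x ^ 2 * Real.sinh x ^ 2
            + k ^ 2 * k ^ 2 * (2 * Real.sinh x ^ 2 * Real.cosh x ^ 2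
              + Real.sinh x ^ 2 * Real.sinh x ^ 2))
          / (Real.cosh x ^ 2 * (Real.cosh x ^ 2 - k ^ 2 * Real.sinh x ^ 2) ^ 2)))) x := by
    have w1 := (hasDerivAt_const x k).div ((Real.hasDerivAt_cosh x).pow 2)
      (pow_ne_zero 2 hcx.ne')
    have w2 := w1.mul (hasDerivAt_Afun k hk0 hk1 x)
    have wden := ((Real.hasDerivAt_cosh x).pow 3).sub
      ((((Real.hasDerivAt_sinh x).pow 2).const_mul (k ^ 2)).mul (Real.hasDerivAt_cosh x))
    have wq := ((Real.hasDerivAt_sinh x).const_mul (k ^ 2)).div wden h3px.ne'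
    have wfin := ((w2.add wq).const_mul (1 / (2 * (H ^ 2 + 1)))).neg
    refine wfin.congr_deriv (Eq.symm ?_)
    have hdne := hdx.ne'
    clear_value k
    simp only [Pi.pow_apply, Pi.div_apply, Pi.mul_apply, Pi.sub_apply]
    field_simp
    ring
  rw [hd2.deriv]
  have hdne := hdx.ne'
  have hcne := hcx.ne'
  trans (1 / (2 * (H ^ 2 + 1)) * (2 / Real.cosh x ^ 2
      - k ^ 2 / (Real.cosh x ^ 2 * (Real.cosh x ^ 2 - k ^ 2 * Real.sinh x ^ 2))
      - (k ^ 2 * Real.cosh x ^ 2 * (Real.cosh x ^ 2 - k ^ 2 * Real.sinh x ^ 2)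
            - 3 * k ^ 2 * Real.cosh x ^ 2 * Real.sinh x ^ 2
            + k ^ 2 * k ^ 2 * (2 * Real.sinh x ^ 2 * Real.cosh x ^ 2
              + Real.sinh x ^ 2 * Real.sinh x ^ 2))
          / (Real.cosh x ^ 2 * (Real.cosh x ^ 2 - k ^ 2 * Real.sinh x ^ 2) ^ 2)))
  · field_simp
    ring
  · have hch1 : 1 ≤ Real.cosh x ^ 2 := by
      nlinarith [sq_nonneg (Real.sinh x), Real.cosh_sq x]
    have hden : 0 < (H ^ 2 + α) * Real.cosh x ^ 2 + 1 - α := by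
      nlinarith [sq_nonneg H]
    have hstep : 1 / (2 * (H ^ 2 + 1)) * (2 / Real.cosh x ^ 2
        - k ^ 2 / (Real.cosh x ^ 2 * (Real.cosh x ^ 2 - k ^ 2 * Real.sinh x ^ 2))
        - (k ^ 2 * Real.cosh x ^ 2 * (Real.cosh x ^ 2 - k ^ 2 * Real.sinh x ^ 2)
            - 3 * k ^ 2 * Real.cosh x ^ 2 * Real.sinh x ^ 2
            + k ^ 2 * k ^ 2 * (2 * Real.sinh x ^ 2 * Real.cosh x ^ 2
              + Real.sinh x ^ 2 * Real.sinh x ^ 2))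
          / (Real.cosh x ^ 2 * (Real.cosh x ^ 2 - k ^ 2 * Real.sinh x ^ 2) ^ 2))
        = (2 * (Real.cosh x ^ 2 - k ^ 2 * Real.sinh x ^ 2) ^ 2
            - k ^ 2 * (Real.cosh x ^ 2 - k ^ 2 * Real.sinh x ^ 2)
            - (k ^ 2 * Real.cosh x ^ 2 * (Real.cosh x ^ 2 - k ^ 2 * Real.sinh x ^ 2)
                - 3 * k ^ 2 * Real.cosh x ^ 2 * Real.sinh x ^ 2
                + k ^ 2 * k ^ 2 * (2 * Real.sinh x ^ 2 * Real.cosh x ^ 2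
                  + Real.sinh x ^ 2 * Real.sinh x ^ 2)))
          / (2 * (H ^ 2 + 1) * Real.cosh x ^ 2
              * (Real.cosh x ^ 2 - k ^ 2 * Real.sinh x ^ 2) ^ 2) := by
      field_simp
    have hP : 2 * (Real.cosh x ^ 2 - k ^ 2 * Real.sinh x ^ 2) ^ 2
            - k ^ 2 * (Real.cosh x ^ 2 - k ^ 2 * Real.sinh x ^ 2)
            - (k ^ 2 * Real.cosh x ^ 2 * (Real.cosh x ^ 2 - k ^ 2 * Real.sinh x ^ 2)
                - 3 * k ^ 2 * Real.cosh x ^ 2 * Real.sinh x ^ 2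
                + k ^ 2 * k ^ 2 * (2 * Real.sinh x ^ 2 * Real.cosh x ^ 2
                  + Real.sinh x ^ 2 * Real.sinh x ^ 2))
        = 2 * (H ^ 2 + α) * Real.cosh x ^ 4 / (H ^ 2 + 1) := by
      rw [Real.sinh_sq, hksq]
      field_simp
      ring
    have hE : Real.cosh x ^ 2 - k ^ 2 * Real.sinh x ^ 2
        = ((H ^ 2 + α) * Real.cosh x ^ 2 + 1 - α) / (H ^ 2 + 1) := by
      rw [Real.sinh_sq, hksq]
      field_simp
      ring
    rw [hstep, hP, hE]
    rw [div_eq_div_iff (by positivity) (by positivity)]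
    field_simp
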